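/- Let a > 0, b ∈ ℝ, and let w be a path of linear growth. Then the stationary-orbit coordinate is invariant under the pathwise solution operator: φ_{a,b}(t, w, x̃_{a,b}(w)) = x̃_{a,b}(θ_t w) for every t ∈ ℝ. -/

import Mathlib

open MeasureTheory Filter Topology

/-- The pathwise solution operator `φ_{a,b}` of the linear scalar SDE `dX = aX dt + b dW`. -/
noncomputable def phiSol (a b t : ℝ) (w : ℝ → ℝ) (x : ℝ) : ℝ :=
  Real.exp (a * t) * x + b * w t +
    a * b * Real.exp (a * t) * ∫ s in (0 : ℝ)..t, Real.exp (-a * s) * w s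

/-- The shift `θ_t w` of a path `w`: `(θ_t w)(s) = w(t + s) - w(t)`. -/
def shiftPath (t : ℝ) (w : ℝ → ℝ) : ℝ → ℝ := fun s => w (t + s) - w t

/-- The stationary-orbit coordinate of the expanding component:
`x̃_{a,b}(w) = -a b ∫₀^∞ e^{-a s} w(s) ds`. -/
noncomputable def xStat (a b : ℝ) (w : ℝ → ℝ) : ℝ :=
  -(a * b) * ∫ s in Set.Ioi (0 : ℝ), Real.exp (-a * s) * w s

section Aux

variable {a C : ℝ} {w : ℝ → ℝ}

/-- `e^{-a s} w s` is integrable on every `Ioi c`. -/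
lemma aux_integrableOn (ha : 0 < a) (hw : Continuous w)
    (hgrowth : ∀ s : ℝ, |w s| ≤ C * (1 + |s|)) (c : ℝ) :
    IntegrableOn (fun s => Real.exp (-a * s) * w s) (Set.Ioi c) := by
  apply integrable_of_isBigO_exp_neg (half_pos ha)
    (((Real.continuous_exp.comp (continuous_const.mul continuous_id)).mul hw).continuousOn)
  rw [Asymptotics.isBigO_iff]
  refine ⟨1, ?_⟩
  have h1 : Tendsto (fun x : ℝ => C * Real.exp (-(a / 2) * x) +
      C * (x * Real.exp (-(a / 2) * x))) atTop (𝓝 0) := by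
    have hx : Tendsto (fun x : ℝ => x * Real.exp (-(a / 2) * x)) atTop (𝓝 0) := by
      have := tendsto_rpow_mul_exp_neg_mul_atTop_nhds_zero 1 (a / 2) (half_pos ha)
      simpa [Real.rpow_one] using this
    have he : Tendsto (fun x : ℝ => Real.exp (-(a / 2) * x)) atTop (𝓝 0) :=
      Real.tendsto_exp_comp_nhds_zero.mpr
        (tendsto_id.const_mul_atTop_of_neg (by linarith : -(a / 2) < 0))
    simpa using (he.const_mul C).add (hx.const_mul C)
  have h2 : ∀ᶠ x : ℝ in atTop, C * Real.exp (-(a / 2) * x) +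
      C * (x * Real.exp (-(a / 2) * x)) ≤ 1 := by
    have := h1.eventually (gt_mem_nhds (by norm_num : (0:ℝ) < 1))
    filter_upwards [this] with x hx using hx.le
  filter_upwards [h2, eventually_ge_atTop (0:ℝ)] with x hx hx0
  have hb := hgrowth x
  rw [abs_of_nonneg hx0] at hb
  have key : |Real.exp (-a * x) * w x| ≤ C * (1 + x) * Real.exp (-a * x) := by
    rw [abs_mul, abs_of_nonneg (Real.exp_pos _).le]
    nlinarith [Real.exp_pos (-a * x), abs_nonneg (w x)]
  have hsplit : Real.exp (-a * x) = Real.exp (-(a / 2) * x) * Real.exp (-(a / 2) * x) := by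
    rw [← Real.exp_add]; ring_nf
  calc ‖Real.exp (-a * x) * w x‖ ≤ C * (1 + x) * Real.exp (-a * x) := key
    _ = (C * Real.exp (-(a / 2) * x) + C * (x * Real.exp (-(a / 2) * x))) *
        Real.exp (-(a / 2) * x) := by rw [hsplit]; ring
    _ ≤ 1 * Real.exp (-(a / 2) * x) :=
        mul_le_mul_of_nonneg_right hx (Real.exp_pos _).le
    _ = 1 * ‖Real.exp (-(a / 2) * x)‖ := by
        rw [Real.norm_eq_abs, abs_of_nonneg (Real.exp_pos _).le]

/-- splitting an `Ioi` integral at an arbitrary point. -/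
lemma aux_split {g : ℝ → ℝ} (hg : ∀ c : ℝ, IntegrableOn g (Set.Ioi c)) (u v : ℝ) :
    ∫ s in Set.Ioi u, g s = (∫ s in u..v, g s) + ∫ s in Set.Ioi v, g s := by
  have key : ∀ u v : ℝ, u ≤ v →
      ∫ s in Set.Ioi u, g s = (∫ s in u..v, g s) + ∫ s in Set.Ioi v, g s := by
    intro u v huv
    rw [intervalIntegral.integral_of_le huv, ← Set.Ioc_union_Ioi_eq_Ioi huv,
      setIntegral_union Set.Ioc_disjoint_Ioi_same measurableSet_Ioi
        ((hg u).mono_set Set.Ioc_subset_Ioi_self) (hg v)]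
  rcases le_total u v with h | h
  · exact key u v h
  · have := key v u h
    rw [intervalIntegral.integral_symm]
    linarith

end Aux

/-- **Invariance of the stationary-orbit coordinate under the pathwise solution operator.**
For `a > 0`, `b : ℝ` and a path `w` of linear growth,
`φ_{a,b}(t, w, x̃_{a,b}(w)) = x̃_{a,b}(θ_t w)` for every `t : ℝ`. -/
theorem xStat_invariant
    (a : ℝ) (ha : 0 < a) (b : ℝ) (w : ℝ → ℝ)
    (hw : Continuous w) (hw0 : w 0 = 0)
    (C : ℝ) (hC : 0 ≤ C) (hgrowth : ∀ s : ℝ, |w s| ≤ C * (1 + |s|)) :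
    ∀ t : ℝ, phiSol a b t w (xStat a b w) = xStat a b (shiftPath t w) := by
  intro t
  have hint : ∀ c : ℝ, IntegrableOn (fun s => Real.exp (-a * s) * w s) (Set.Ioi c) :=
    aux_integrableOn ha hw hgrowth
  have hmp : MeasurePreserving (fun s : ℝ => t + s) volume volume :=
    measurePreserving_add_left volume t
  have hemb : MeasurableEmbedding (fun s : ℝ => t + s) :=
    (Homeomorph.addLeft t).measurableEmbedding
  have hpre : (fun s : ℝ => t + s) ⁻¹' Set.Ioi t = Set.Ioi 0 := by
    ext x; simp
  have htrans : ∫ s in Set.Ioi (0:ℝ), Real.exp (-a * (t + s)) * w (t + s)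
      = ∫ s in Set.Ioi t, Real.exp (-a * s) * w s := by
    rw [← hpre]
    exact hmp.setIntegral_preimage_emb hemb (fun s => Real.exp (-a * s) * w s) (Set.Ioi t)
  have hint_trans : IntegrableOn (fun s => Real.exp (-a * (t + s)) * w (t + s))
      (Set.Ioi (0:ℝ)) := by
    have hres := hmp.restrict_preimage (s := Set.Ioi t) measurableSet_Ioi
    have := hres.integrable_comp_emb hemb (g := fun s => Real.exp (-a * s) * w s)
    rw [hpre] at this
    exact this.mpr (hint t)
  have hexp_int : IntegrableOn (fun s => Real.exp (-a * s)) (Set.Ioi (0:ℝ)) :=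
    exp_neg_integrableOn_Ioi 0 ha
  have hexp : ∫ s in Set.Ioi (0:ℝ), Real.exp (-a * s) = a⁻¹ := by
    have := MeasureTheory.integral_comp_mul_left_Ioi (fun x => Real.exp (-x)) 0 ha
    simpa [integral_exp_neg_Ioi, integral_exp_Iic_zero, neg_mul, smul_eq_mul] using this
  have hsh : ∀ s : ℝ, Real.exp (-a * s) * shiftPath t w s
      = Real.exp (a * t) * (Real.exp (-a * (t + s)) * w (t + s))
        - w t * Real.exp (-a * s) := by
    intro s
    have hmul : Real.exp (a * t) * Real.exp (-a * (t + s)) = Real.exp (-a * s) := by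
      rw [← Real.exp_add]; ring_nf
    simp only [shiftPath]
    linear_combination (-(w (t + s))) * hmul
  have hR : ∫ s in Set.Ioi (0:ℝ), Real.exp (-a * s) * shiftPath t w s
      = Real.exp (a * t) * (∫ s in Set.Ioi (0:ℝ), Real.exp (-a * (t + s)) * w (t + s))
        - w t * a⁻¹ := by
    rw [show (fun s => Real.exp (-a * s) * shiftPath t w s)
        = fun s => Real.exp (a * t) * (Real.exp (-a * (t + s)) * w (t + s))
          - w t * Real.exp (-a * s) from funext hsh]
    rw [integral_sub (hint_trans.const_mul _) (hexp_int.const_mul _),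
      integral_const_mul, integral_const_mul, hexp]
  have hsplit : ∫ s in Set.Ioi (0:ℝ), Real.exp (-a * s) * w s
      = (∫ s in (0:ℝ)..t, Real.exp (-a * s) * w s)
        + ∫ s in Set.Ioi t, Real.exp (-a * s) * w s :=
    aux_split hint 0 t
  have hK : ∫ s in Set.Ioi (0:ℝ), Real.exp (-a * (t + s)) * w (t + s)
      = (∫ s in Set.Ioi (0:ℝ), Real.exp (-a * s) * w s)
        - ∫ s in (0:ℝ)..t, Real.exp (-a * s) * w s := by
    rw [htrans]; linarith
  simp only [phiSol, xStat]
  rw [hR, hK]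
  have ha' : a ≠ 0 := ne_of_gt ha
  field_simp
  ring
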